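/- For r, s ∈ ℕ not both zero, a(r,s,0) = a(r-1,s,0) + Σ_{i=0}^{1} C(s, 1-i) · a(r, s-1, i), i.e., a(r,s,0) = a(r-1,s,0) + s·a(r,s-1,0) + a(r,s-1,1). -/

import Mathlib

open Finset

/-- One step of the linear parking process: the driver with choice `c` takes the
first free space with index at least `c`, if any; otherwise the failure count increases. -/
def parkStep {n : ℕ} (p : Finset (Fin n) × ℕ) (c : Fin n) : Finset (Fin n) × ℕ :=
  if h : ((Finset.univ \ p.1).filter (fun x => c ≤ x)).Nonempty then
    (insert (((Finset.univ \ p.1).filter (fun x => c ≤ x)).min' h) p.1, p.2)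
  else
    (p.1, p.2 + 1)

/-- The set of occupied spaces and the number of drivers who fail to park,
when drivers `0, 1, ..., m-1` with choices `f 0, f 1, ..., f (m-1)` arrive in order. -/
def parkRun {n m : ℕ} (f : Fin m → Fin n) : Finset (Fin n) × ℕ :=
  (List.ofFn f).foldl parkStep (∅, 0)

/-- The defect of an assignment: the number of drivers who fail to park. -/
def defect {n m : ℕ} (f : Fin m → Fin n) : ℕ := (parkRun f).2

/-- `cp n m k` is the number of assignments of `m` drivers to `n` spaces
under which exactly `k` drivers fail to park. -/
def cp (n m k : ℕ) : ℕ :=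
  (Finset.univ.filter (fun f : Fin m → Fin n => defect f = k)).card

/-- `a r s k` is the number of assignments of `s + k` drivers to `r + s` spaces such that
exactly `k` drivers leave (and hence `s` spaces end up occupied and `r` remain empty);
it is `0` whenever one of the arguments is negative. -/
def a (r s k : ℤ) : ℕ :=
  if 0 ≤ r ∧ 0 ≤ s ∧ 0 ≤ k then cp (r + s).toNat (s + k).toNat k.toNat else 0

namespace PF

variable {n : ℕ}

/-- step with shifted counter -/
lemma parkStep_shift (P : Finset (Fin n)) (k j : ℕ) (c : Fin n) :
    parkStep (P, k + j) c = ((parkStep (P, k) c).1, (parkStep (P, k) c).2 + j) := by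
  unfold parkStep
  split <;> simp [Nat.add_right_comm]

lemma foldl_shift (l : List (Fin n)) (P : Finset (Fin n)) (k j : ℕ) :
    l.foldl parkStep (P, k + j)
      = ((l.foldl parkStep (P, k)).1, (l.foldl parkStep (P, k)).2 + j) := by
  induction l generalizing P k with
  | nil => simp
  | cons c t ih =>
      simp only [List.foldl_cons, parkStep_shift]
      rw [show (parkStep (P, k) c) = ((parkStep (P, k) c).1, (parkStep (P, k) c).2) from rfl] at *
      exact ih _ _

lemma snd_foldl_le (l : List (Fin n)) (P : Finset (Fin n)) (k : ℕ) :
    k ≤ (l.foldl parkStep (P, k)).2 := by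
  have := foldl_shift l P 0 k
  simp only [Nat.zero_add] at this
  rw [this]; omega

lemma subset_parkStep (p : Finset (Fin n) × ℕ) (c : Fin n) : p.1 ⊆ (parkStep p c).1 := by
  unfold parkStep; split
  · exact subset_insert _ _
  · exact subset_rfl

lemma subset_foldl (l : List (Fin n)) (p : Finset (Fin n) × ℕ) :
    p.1 ⊆ (l.foldl parkStep p).1 := by
  induction l generalizing p with
  | nil => exact subset_rfl
  | cons c t ih => exact (subset_parkStep p c).trans (ih _)

lemma card_parkStep (p : Finset (Fin n) × ℕ) (c : Fin n) :
    (parkStep p c).1.card + (parkStep p c).2 = p.1.card + p.2 + 1 := by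
  unfold parkStep
  split_ifs with h
  · have hm := Finset.min'_mem _ h
    simp only [Finset.mem_filter, Finset.mem_sdiff] at hm
    simp only [Finset.card_insert_of_notMem hm.1.2]
    show _ = #p.1 + p.2 + 1
    omega
  · show #p.1 + (p.2 + 1) = _
    omega

lemma card_foldl (l : List (Fin n)) (p : Finset (Fin n) × ℕ) :
    (l.foldl parkStep p).1.card + (l.foldl parkStep p).2 = p.1.card + p.2 + l.length := by
  induction l generalizing p with
  | nil => simp
  | cons c t ih =>
      simp only [List.foldl_cons, List.length_cons]
      rw [ih, card_parkStep]; omega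

/-! ### relating `Fin (n+1)` runs with `Fin n` runs -/

local notation "emb" => (Fin.castSuccEmb : Fin n ↪ Fin (n+1))
local notation "lst" => Fin.last n

lemma last_not_mem_map (P : Finset (Fin n)) : lst ∉ P.map emb := by
  simp only [Finset.mem_map]
  rintro ⟨x, -, hx⟩
  exact absurd hx (Fin.castSucc_lt_last x).ne

lemma sdiff_insert_last (P : Finset (Fin n)) :
    (Finset.univ \ insert lst (P.map emb)) = (Finset.univ \ P).map emb := by
  ext x
  simp only [Finset.mem_sdiff, Finset.mem_insert, Finset.mem_univ, true_and, Finset.mem_map,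
    Fin.coe_castSuccEmb, not_or]
  constructor
  · rintro ⟨hne, hnm⟩
    obtain ⟨y, rfl⟩ := Fin.exists_castSucc_eq.2 hne
    exact ⟨y, fun hy => hnm ⟨y, hy, rfl⟩, rfl⟩
  · rintro ⟨y, hy, rfl⟩
    exact ⟨(Fin.castSucc_lt_last y).ne, fun ⟨z, hz, hzy⟩ => hy ((Fin.castSucc_injective n) hzy ▸ hz)⟩

lemma sdiff_map (P : Finset (Fin n)) :
    (Finset.univ \ P.map emb : Finset (Fin (n+1))) = insert lst ((Finset.univ \ P).map emb) := by
  ext x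
  constructor
  · intro hx
    by_cases h1 : x = lst
    · exact Finset.mem_insert.2 (Or.inl h1)
    · refine Finset.mem_insert.2 (Or.inr ?_)
      rw [← sdiff_insert_last P]
      simp only [Finset.mem_sdiff, Finset.mem_univ, true_and, Finset.mem_insert, not_or]
      simp only [Finset.mem_sdiff] at hx
      exact ⟨h1, hx.2⟩
  · intro hx
    rcases Finset.mem_insert.1 hx with rfl | hx
    · simp only [Finset.mem_sdiff, Finset.mem_univ, true_and]
      exact last_not_mem_map P
    · rw [← sdiff_insert_last P] at hx
      simp only [Finset.mem_sdiff, Finset.mem_univ, true_and, Finset.mem_insert, not_or] at hx ⊢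
      exact hx.2

lemma filter_map_le (P : Finset (Fin n)) (c : Fin n) :
    ((P.map emb).filter (fun x => (c.castSucc : Fin (n+1)) ≤ x))
      = (P.filter (fun x => c ≤ x)).map emb := by
  rw [Finset.filter_map]
  refine congrArg _ (Finset.filter_congr ?_)
  intro x _
  simp [Fin.castSucc_le_castSucc_iff]

lemma min'_map (s : Finset (Fin n)) (h : s.Nonempty) :
    (s.map emb).min' (Finset.map_nonempty.mpr h) = (s.min' h).castSucc := by
  apply le_antisymm
  · exact Finset.min'_le _ _ (Finset.mem_map_of_mem _ (s.min'_mem h))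
  · apply Finset.le_min'
    intro y hy
    obtain ⟨x, hx, rfl⟩ := Finset.mem_map.1 hy
    exact Fin.castSucc_le_castSucc_iff.2 (Finset.min'_le _ _ hx)

/-- L2: step when top occupied, small choice -/
lemma step_top_occupied (P : Finset (Fin n)) (k : ℕ) (c : Fin n) :
    parkStep (insert lst (P.map emb), k) c.castSucc
      = (insert lst ((parkStep (P, k) c).1.map emb), (parkStep (P, k) c).2) := by
  unfold parkStep
  simp only [sdiff_insert_last P, filter_map_le]
  split_ifs with h1 h2 h2
  · rw [min'_map _ h2]
    simp only [Finset.map_insert, Prod.mk.injEq]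
    exact ⟨Finset.insert_comm _ _ _, trivial⟩
  · exact absurd (Finset.map_nonempty.mp h1) h2
  · exact absurd (Finset.map_nonempty.mpr h2) h1
  · rfl

/-- L1: step when top free, small choice -/
lemma step_top_free (P : Finset (Fin n)) (k : ℕ) (c : Fin n) :
    parkStep (P.map emb, k) c.castSucc
      = if ((Finset.univ \ P).filter (fun x => c ≤ x)).Nonempty
        then ((parkStep (P, k) c).1.map emb, k)
        else (insert lst (P.map emb), k) := by
  unfold parkStep
  simp only [sdiff_map P, Finset.filter_insert, if_pos (Fin.le_last c.castSucc), filter_map_le]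
  rw [dif_pos (Finset.insert_nonempty _ _)]
  by_cases h : ((Finset.univ \ P).filter (fun x => c ≤ x)).Nonempty
  · rw [if_pos h, dif_pos h]
    have hmin : (insert lst (((Finset.univ \ P).filter (fun x => c ≤ x)).map emb)).min'
        (Finset.insert_nonempty _ _) = (((Finset.univ \ P).filter (fun x => c ≤ x)).min' h).castSucc := by
      apply le_antisymm
      · apply Finset.min'_le
        exact Finset.mem_insert.2 (Or.inr (Finset.mem_map_of_mem _ (Finset.min'_mem _ h)))
      · apply Finset.le_min'
        intro y hy
        rcases Finset.mem_insert.1 hy with rfl | hy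
        · exact Fin.le_last _
        · obtain ⟨x, hx, rfl⟩ := Finset.mem_map.1 hy
          exact Fin.castSucc_le_castSucc_iff.2 (Finset.min'_le _ _ hx)
    rw [hmin]
    simp only [Finset.map_insert, Prod.mk.injEq]
    exact ⟨rfl, trivial⟩
  · rw [if_neg h]
    have hT := Finset.not_nonempty_iff_eq_empty.1 h
    have hmin : (insert lst (((Finset.univ \ P).filter (fun x => c ≤ x)).map emb)).min'
        (Finset.insert_nonempty _ _) = lst := by
      apply le_antisymm
      · exact Finset.min'_le _ _ (Finset.mem_insert_self _ _)
      · apply Finset.le_min'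
        intro y hy
        rcases Finset.mem_insert.1 hy with rfl | hy
        · exact le_rfl
        · rw [hT] at hy; simp at hy
    rw [hmin]

/-- choosing the top space -/
lemma step_last (p : Finset (Fin (n+1)) × ℕ) :
    parkStep p lst = if lst ∈ p.1 then (p.1, p.2 + 1) else (insert lst p.1, p.2) := by
  unfold parkStep
  by_cases h : lst ∈ p.1
  · rw [if_pos h, dif_neg]
    rintro ⟨y, hy⟩
    simp only [Finset.mem_filter, Finset.mem_sdiff, Finset.mem_univ, true_and] at hy
    exact hy.1 (Fin.last_le_iff.1 hy.2 ▸ h)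
  · have hne : ((Finset.univ \ p.1).filter (fun x => lst ≤ x)).Nonempty :=
      ⟨lst, by simp [Finset.mem_filter, Finset.mem_sdiff, h]⟩
    rw [if_neg h, dif_pos hne]
    have hmin : ((Finset.univ \ p.1).filter (fun x => lst ≤ x)).min' hne = lst := by
      apply le_antisymm
      · have := Finset.min'_mem _ hne
        simp only [Finset.mem_filter] at this
        exact Fin.le_last _
      · have := Finset.min'_mem _ hne
        simp only [Finset.mem_filter] at this
        exact this.2
    rw [hmin]

lemma last_mem_step_last (p : Finset (Fin (n+1)) × ℕ) : lst ∈ (parkStep p lst).1 := by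
  rw [step_last]; split <;> simp [*]

/-- Lemma A: run with top occupied mirrors the small run exactly. -/
lemma foldlA (l : List (Fin n)) (P : Finset (Fin n)) (k : ℕ) :
    (l.map Fin.castSucc).foldl parkStep (insert lst (P.map emb), k)
      = (insert lst ((l.foldl parkStep (P, k)).1.map emb), (l.foldl parkStep (P, k)).2) := by
  induction l generalizing P k with
  | nil => simp
  | cons c t ih =>
      simp only [List.map_cons, List.foldl_cons, step_top_occupied]
      rw [ih]

/-- Lemma B: run with top free. -/
lemma foldlB (l : List (Fin n)) (P : Finset (Fin n)) (k : ℕ) :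
    (l.map Fin.castSucc).foldl parkStep (P.map emb, k)
      = if (l.foldl parkStep (P, k)).2 = k
        then ((l.foldl parkStep (P, k)).1.map emb, k)
        else (insert lst ((l.foldl parkStep (P, k)).1.map emb), (l.foldl parkStep (P, k)).2 - 1) := by
  induction l generalizing P k with
  | nil => simp
  | cons c t ih =>
      simp only [List.map_cons, List.foldl_cons, step_top_free]
      by_cases h : ((Finset.univ \ P).filter (fun x => c ≤ x)).Nonempty
      · rw [if_pos h]
        have hstep : parkStep (P, k) c = ((parkStep (P, k) c).1, k) := by
          unfold parkStep; rw [dif_pos h]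
        rw [ih ((parkStep (P, k) c).1) k]
        generalize (parkStep (P, k) c).1 = Q at hstep ⊢
        simp only [hstep]
      · rw [if_neg h]
        have hstep : parkStep (P, k) c = (P, k + 1) := by
          unfold parkStep; rw [dif_neg h]
        rw [foldlA t P k]
        simp only [hstep]
        rw [foldl_shift t P k 1]
        have hle := snd_foldl_le t P k
        rw [if_neg (by omega)]
        simp

/-! ### ofFn and insertNth -/

lemma ofFn_insertNth {α : Type*} : ∀ {m : ℕ} (i : Fin (m + 1)) (x : α) (g : Fin m → α),
    List.ofFn (i.insertNth x g) =
      (List.ofFn g).take i.val ++ x :: (List.ofFn g).drop i.val := by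
  intro m
  induction m with
  | zero =>
      intro i x g
      have h0 : i = 0 := Fin.fin_one_eq_zero i
      subst h0
      simp [Fin.insertNth_zero', List.ofFn_succ]
  | succ m ih =>
      intro i x g
      induction i using Fin.cases with
      | zero => simp [Fin.insertNth_zero', List.ofFn_succ]
      | succ i' =>
          have h0 : (Fin.insertNth (α := fun _ => α) i'.succ x g) 0 = g 0 := by
            have hz : (0 : Fin (m+2)) = i'.succ.succAbove 0 := by
              rw [Fin.succAbove_of_castSucc_lt] <;> simp
            rw [hz, Fin.insertNth_apply_succAbove]
          have hcomp : (fun j : Fin (m+1) => (Fin.insertNth (α := fun _ => α) i'.succ x g) j.succ)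
              = i'.insertNth x (fun t => g t.succ) := by
            funext j
            refine Fin.succAboveCases i' ?_ (fun j'' => ?_) j
            · rw [Fin.insertNth_apply_same, Fin.insertNth_apply_same]
            · rw [← Fin.succ_succAbove_succ, Fin.insertNth_apply_succAbove,
                Fin.insertNth_apply_succAbove]
          rw [List.ofFn_succ, h0, hcomp, ih, List.ofFn_succ (f := g)]
          simp [Fin.val_succ, List.take_succ_cons, List.drop_succ_cons]

lemma ofFn_cast {m : ℕ} (g : Fin m → Fin n) :
    List.ofFn (fun j => (g j).castSucc) = (List.ofFn g).map Fin.castSucc :=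
  (List.map_ofFn).symm

/-! ### run of lifted functions -/

lemma parkRun_cast {m : ℕ} (g : Fin m → Fin n) :
    parkRun (fun j => (g j).castSucc)
      = if defect g = 0 then ((parkRun g).1.map emb, 0)
        else (insert lst ((parkRun g).1.map emb), defect g - 1) := by
  have h := foldlB (List.ofFn g) ∅ 0
  rw [Finset.map_empty] at h
  unfold defect parkRun
  rw [ofFn_cast, h]

lemma defect_cast {m : ℕ} (g : Fin m → Fin n) :
    defect (fun j => (g j).castSucc) = if defect g = 0 then 0 else defect g - 1 := by
  show (parkRun _).2 = _
  rw [parkRun_cast]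
  by_cases h0 : defect g = 0
  · rw [if_pos h0, if_pos h0]
  · rw [if_neg h0, if_neg h0]

lemma last_mem_cast {m : ℕ} (g : Fin m → Fin n) :
    lst ∈ (parkRun (fun j => (g j).castSucc)).1 ↔ ¬ defect g = 0 := by
  rw [parkRun_cast]
  split_ifs with h
  · simp only [h, not_true_eq_false, iff_false]
    exact last_not_mem_map _
  · simp [h, Finset.mem_insert]

/-- inserting a driver who chooses the top space does not change the defect -/
lemma defect_insert_last {m : ℕ} (i : Fin (m + 1)) (g : Fin m → Fin n) :
    defect (i.insertNth lst (fun j => (g j).castSucc)) = defect g := by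
  unfold defect parkRun
  rw [ofFn_insertNth, ofFn_cast, ← List.map_take, ← List.map_drop]
  set l1 := (List.ofFn g).take i.val with hl1
  set l2 := (List.ofFn g).drop i.val with hl2
  have hsplit : List.ofFn g = l1 ++ l2 := (List.take_append_drop _ _).symm
  rw [List.foldl_append, List.foldl_cons]
  have hB := foldlB l1 ∅ 0
  rw [Finset.map_empty] at hB
  rw [hB]
  rw [hsplit, List.foldl_append]
  by_cases h1 : (l1.foldl parkStep (∅, 0)).2 = 0
  · rw [if_pos h1]
    rw [step_last, if_neg (last_not_mem_map _)]
    rw [foldlA]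
    have heq : l1.foldl parkStep (∅, 0) = ((l1.foldl parkStep (∅, 0)).1, 0) :=
      Prod.ext rfl h1
    rw [heq]
  · rw [if_neg h1]
    rw [step_last, if_pos (Finset.mem_insert_self _ _)]
    have hpos : 1 ≤ (l1.foldl parkStep (∅, 0)).2 := Nat.one_le_iff_ne_zero.2 h1
    have : (l1.foldl parkStep (∅, 0)).2 - 1 + 1 = (l1.foldl parkStep (∅, 0)).2 := by omega
    rw [this, foldlA]

/-! ### two drivers choosing the top space -/

lemma snd_le_foldl (l : List (Fin n)) (p : Finset (Fin n) × ℕ) :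
    p.2 ≤ (l.foldl parkStep p).2 :=
  snd_foldl_le l p.1 p.2

lemma one_le_of_two_last (la lb lc : List (Fin (n+1))) :
    1 ≤ ((la ++ lst :: (lb ++ lst :: lc)).foldl parkStep (∅, 0)).2 := by
  rw [List.foldl_append, List.foldl_cons, List.foldl_append, List.foldl_cons]
  set p1 := parkStep (la.foldl parkStep (∅, 0)) lst with hp1
  have h1 : lst ∈ p1.1 := last_mem_step_last _
  set p2 := lb.foldl parkStep p1 with hp2
  have h2 : lst ∈ p2.1 := subset_foldl lb p1 h1
  rw [step_last, if_pos h2]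
  have h3 := snd_le_foldl lc (p2.1, p2.2 + 1)
  simp only at h3
  omega

lemma defect_pos_of_two_last {m : ℕ} (f : Fin m → Fin (n+1)) (i j : Fin m)
    (hij : i < j) (hi : f i = lst) (hj : f j = lst) : 1 ≤ defect f := by
  unfold defect parkRun
  set l := List.ofFn f with hl
  have hlen : l.length = m := by rw [hl]; exact List.length_ofFn
  have hiv : (i : ℕ) < l.length := by rw [hlen]; exact i.isLt
  have hjv : (j : ℕ) < l.length := by rw [hlen]; exact j.isLt
  have hgi : l[(i : ℕ)] = lst := by
    simp only [hl, List.getElem_ofFn, Fin.eta]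
    exact hi
  have hgj : l[(j : ℕ)] = lst := by
    simp only [hl, List.getElem_ofFn, Fin.eta]
    exact hj
  have hdrop : l.drop (i + 1) = (l.drop (i + 1)).take ((j : ℕ) - i - 1)
      ++ lst :: l.drop ((j : ℕ) + 1) := by
    conv_lhs => rw [← List.take_append_drop ((j : ℕ) - i - 1) (l.drop (i + 1))]
    congr 1
    rw [List.drop_drop]
    have harith : (i : ℕ) + 1 + ((j : ℕ) - i - 1) = j := by
      have := hij
      rw [Fin.lt_def] at this
      omega
    rw [harith]
    rw [List.drop_eq_getElem_cons hjv, hgj]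
  have hdec : l = l.take i ++ lst :: ((l.drop (i+1)).take ((j : ℕ) - i - 1)
      ++ lst :: l.drop ((j : ℕ) + 1)) := by
    conv_lhs => rw [← List.take_append_drop ((i : ℕ)) l,
      List.drop_eq_getElem_cons hiv, hgi, hdrop]
  rw [hdec]
  exact one_le_of_two_last _ _ _


/-! ### counting -/

lemma cp_zero_drivers (N : ℕ) : cp N 0 0 = 1 := by
  unfold cp
  have h : (Finset.univ.filter (fun f : Fin 0 → Fin N => defect f = 0)) = Finset.univ := by
    apply Finset.filter_true_of_mem
    intro f _
    unfold defect parkRun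
    simp
  rw [h, Finset.card_univ]
  simp

lemma cp_lt (N m : ℕ) (h : N < m) : cp N m 0 = 0 := by
  unfold cp
  rw [Finset.card_eq_zero, Finset.filter_eq_empty_iff]
  intro f _
  intro h0
  have hc := card_foldl (List.ofFn f) ((∅ : Finset (Fin N)), 0)
  have hle : ((List.ofFn f).foldl parkStep (∅, 0)).1.card ≤ N := by
    have := Finset.card_le_univ ((List.ofFn f).foldl parkStep ((∅ : Finset (Fin N)), 0)).1
    simpa using this
  unfold defect parkRun at h0
  simp only [Finset.card_empty, List.length_ofFn] at hc
  omega

lemma cardB1 (s : ℕ) :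
    (Finset.univ.filter (fun f : Fin (s+1) → Fin (n+1) =>
        defect f = 0 ∧ ∃ i, f i = lst)).card = (s+1) * cp n s 0 := by
  classical
  have hbij : (Finset.univ.filter (fun q : Fin (s+1) × (Fin s → Fin n) => defect q.2 = 0)).card
      = (Finset.univ.filter (fun f : Fin (s+1) → Fin (n+1) =>
          defect f = 0 ∧ ∃ i, f i = lst)).card := by
    apply Finset.card_bij (i := fun q _ => q.1.insertNth lst (fun j => (q.2 j).castSucc))
    · intro q hq
      simp only [Finset.mem_filter, Finset.mem_univ, true_and] at hq ⊢
      exact ⟨by rw [defect_insert_last]; exact hq, q.1, Fin.insertNth_apply_same _ _ _⟩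
    · intro q hq q' hq' heq
      simp only [Finset.mem_filter, Finset.mem_univ, true_and] at hq hq'
      obtain ⟨i, g⟩ := q; obtain ⟨i', g'⟩ := q'
      simp only at heq ⊢
      have hii : i = i' := by
        by_contra hne
        obtain ⟨t, ht⟩ := Fin.exists_succAbove_eq hne
        have h1 : (Fin.insertNth (α := fun _ => Fin (n+1)) i' lst (fun j => (g' j).castSucc)) i
            = (g' t).castSucc := by
          rw [← ht, Fin.insertNth_apply_succAbove]
        have h2 : (Fin.insertNth (α := fun _ => Fin (n+1)) i lst (fun j => (g j).castSucc)) i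
            = lst := Fin.insertNth_apply_same _ _ _
        rw [heq, h1] at h2
        exact absurd h2 (Fin.castSucc_lt_last _).ne
      subst hii
      refine Prod.ext rfl (funext fun j => ?_)
      have hj := congrFun heq (i.succAbove j)
      rw [Fin.insertNth_apply_succAbove, Fin.insertNth_apply_succAbove] at hj
      exact Fin.castSucc_injective n hj
    · intro f hf
      simp only [Finset.mem_filter, Finset.mem_univ, true_and] at hf
      obtain ⟨hf0, i, hi⟩ := hf
      have hother : ∀ j, j ≠ i → f j ≠ lst := by
        intro j hji hlj
        rcases lt_or_gt_of_ne hji with hlt | hlt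
        · have := defect_pos_of_two_last f j i hlt hlj hi; omega
        · have := defect_pos_of_two_last f i j hlt hi hlj; omega
      set g : Fin s → Fin n :=
        fun j => (f (i.succAbove j)).castPred (hother _ (Fin.succAbove_ne i j)) with hg
      have hfeq : i.insertNth lst (fun j => (g j).castSucc) = f := by
        funext x
        refine Fin.succAboveCases i ?_ (fun j => ?_) x
        · rw [Fin.insertNth_apply_same]; exact hi.symm
        · rw [Fin.insertNth_apply_succAbove]
          simp [hg, Fin.castSucc_castPred]
      have hdg : defect g = 0 := by
        have := defect_insert_last i g
        rw [hfeq] at this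
        omega
      exact ⟨(i, g), by simp [Finset.mem_filter, hdg], hfeq⟩
  rw [← hbij]
  have hprod : (Finset.univ.filter (fun q : Fin (s+1) × (Fin s → Fin n) => defect q.2 = 0))
      = Finset.univ ×ˢ (Finset.univ.filter (fun g : Fin s → Fin n => defect g = 0)) := by
    ext q
    simp [Finset.mem_product]
  rw [hprod, Finset.card_product, Finset.card_univ, Fintype.card_fin]
  rfl

lemma cardCast (m k : ℕ) (hk : k ≤ 1) :
    (Finset.univ.filter (fun f : Fin m → Fin (n+1) =>
        defect f = 0 ∧ (¬ ∃ i, f i = lst) ∧ (lst ∈ (parkRun f).1 ↔ k ≠ 0))).card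
      = cp n m k := by
  classical
  unfold cp
  symm
  apply Finset.card_bij (i := fun g _ => (fun j => (g j).castSucc))
  · intro g hg
    simp only [Finset.mem_filter, Finset.mem_univ, true_and] at hg ⊢
    refine ⟨?_, ?_, ?_⟩
    · rw [defect_cast]
      interval_cases k
      · rw [if_pos hg]
      · rw [if_neg (by omega)]; omega
    · rintro ⟨i, hi⟩
      exact absurd hi (Fin.castSucc_lt_last _).ne
    · rw [last_mem_cast, hg]
  · intro g hg g' hg' heq
    funext j
    exact Fin.castSucc_injective n (congrFun heq j)
  · intro f hf
    simp only [Finset.mem_filter, Finset.mem_univ, true_and] at hf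
    obtain ⟨hf0, hne, hmem⟩ := hf
    have hne' : ∀ i, f i ≠ lst := fun i hi => hne ⟨i, hi⟩
    set g : Fin m → Fin n := fun j => (f j).castPred (hne' j) with hg
    have hfeq : (fun j => (g j).castSucc) = f := by
      funext j
      simp [hg, Fin.castSucc_castPred]
    have hdg : defect g = k := by
      have hmc := last_mem_cast g
      have hdc := defect_cast g
      rw [hfeq] at hmc hdc
      interval_cases k
      · simp only [ne_eq, not_true_eq_false, iff_false] at hmem
        by_contra hcon
        exact hmem (hmc.mpr hcon)
      · have hm : lst ∈ (parkRun f).1 := hmem.mpr (by omega)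
        have hgne := hmc.mp hm
        rw [if_neg hgne] at hdc
        omega
    exact ⟨g, by simp [Finset.mem_filter, hdg], hfeq⟩

theorem cp_rec (s : ℕ) :
    cp (n+1) (s+1) 0 = cp n (s+1) 0 + (s+1) * cp n s 0 + cp n (s+1) 1 := by
  classical
  have h1 := Finset.card_filter_add_card_filter_not
    (s := Finset.univ.filter (fun f : Fin (s+1) → Fin (n+1) => defect f = 0))
    (p := fun f => ∃ i, f i = lst)
  rw [Finset.filter_filter, Finset.filter_filter] at h1
  have h2 := Finset.card_filter_add_card_filter_not
    (s := Finset.univ.filter (fun f : Fin (s+1) → Fin (n+1) => defect f = 0 ∧ ¬∃ i, f i = lst))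
    (p := fun f => lst ∈ (parkRun f).1)
  rw [Finset.filter_filter, Finset.filter_filter] at h2
  have hA := cardB1 (n := n) s
  have e2 : Finset.univ.filter
        (fun f : Fin (s+1) → Fin (n+1) => (defect f = 0 ∧ ¬∃ i, f i = lst) ∧ lst ∈ (parkRun f).1)
      = Finset.univ.filter (fun f : Fin (s+1) → Fin (n+1) =>
          defect f = 0 ∧ (¬ ∃ i, f i = lst) ∧ (lst ∈ (parkRun f).1 ↔ (1:ℕ) ≠ 0)) := by
    apply Finset.filter_congr
    intro f _
    constructor
    · rintro ⟨⟨ha, hb⟩, hc⟩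
      exact ⟨ha, hb, by simp [hc]⟩
    · rintro ⟨ha, hb, hc⟩
      exact ⟨⟨ha, hb⟩, hc.mpr (by norm_num)⟩
  have e3 : Finset.univ.filter
        (fun f : Fin (s+1) → Fin (n+1) => (defect f = 0 ∧ ¬∃ i, f i = lst) ∧ ¬ lst ∈ (parkRun f).1)
      = Finset.univ.filter (fun f : Fin (s+1) → Fin (n+1) =>
          defect f = 0 ∧ (¬ ∃ i, f i = lst) ∧ (lst ∈ (parkRun f).1 ↔ (0:ℕ) ≠ 0)) := by
    apply Finset.filter_congr
    intro f _
    constructor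
    · rintro ⟨⟨ha, hb⟩, hc⟩
      exact ⟨ha, hb, by simp [hc]⟩
    · rintro ⟨ha, hb, hc⟩
      refine ⟨⟨ha, hb⟩, fun hm => ?_⟩
      exact absurd (hc.mp hm) (by norm_num)
  have hB : (Finset.univ.filter
      (fun f : Fin (s+1) → Fin (n+1) => (defect f = 0 ∧ ¬∃ i, f i = lst) ∧ lst ∈ (parkRun f).1)).card
      = cp n (s+1) 1 := by
    rw [e2]
    exact cardCast (s+1) 1 (by norm_num)
  have hC : (Finset.univ.filter
      (fun f : Fin (s+1) → Fin (n+1) => (defect f = 0 ∧ ¬∃ i, f i = lst) ∧ ¬ lst ∈ (parkRun f).1)).card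
      = cp n (s+1) 0 := by
    rw [e3]
    exact cardCast (s+1) 0 (by norm_num)
  have hcp : cp (n+1) (s+1) 0
      = (Finset.univ.filter (fun f : Fin (s+1) → Fin (n+1) => defect f = 0)).card := rfl
  rw [hcp, ← h1, ← h2, hA, hB, hC]
  ring

lemma a_nat (r s k : ℕ) : a r s k = cp (r+s) (s+k) k := by
  unfold a
  rw [if_pos ⟨Int.natCast_nonneg r, Int.natCast_nonneg s, Int.natCast_nonneg k⟩,
    show ((r:ℤ)+(s:ℤ)).toNat = r+s from by rw [← Nat.cast_add, Int.toNat_natCast],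
    show ((s:ℤ)+(k:ℤ)).toNat = s+k from by rw [← Nat.cast_add, Int.toNat_natCast],
    Int.toNat_natCast]

lemma a_nat0 (r s : ℕ) : a r s 0 = cp (r+s) s 0 := by
  have h := a_nat r s 0
  simpa using h

lemma a_nat1 (r s : ℕ) : a r s 1 = cp (r+s) (s+1) 1 := by
  have h := a_nat r s 1
  simpa using h

lemma a_neg_fst (s k : ℤ) : a (-1) s k = 0 := by
  unfold a
  rw [if_neg]
  rintro ⟨h1, -⟩
  omega

lemma a_neg_snd (r k : ℤ) : a r (-1) k = 0 := by
  unfold a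
  rw [if_neg]
  rintro ⟨-, h1, -⟩
  omega

end PF

theorem stmt3 (r s : ℕ) (h : ¬(r = 0 ∧ s = 0)) :
    a r s 0 = a ((r : ℤ) - 1) s 0 + s * a r ((s : ℤ) - 1) 0 + a r ((s : ℤ) - 1) 1 := by
  obtain rfl | ⟨s', rfl⟩ : s = 0 ∨ ∃ s', s = s' + 1 := by
    rcases s with _ | s'
    exacts [Or.inl rfl, Or.inr ⟨s', rfl⟩]
  · -- s = 0
    obtain ⟨r', rfl⟩ : ∃ r', r = r' + 1 := ⟨r - 1, by omega⟩
    rw [show (((0:ℕ)):ℤ) - 1 = (-1 : ℤ) from by norm_num, PF.a_neg_snd,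
      show (((r'+1:ℕ)):ℤ) - 1 = ((r' : ℕ) : ℤ) from by push_cast; ring,
      PF.a_nat0 (r'+1) 0, PF.a_nat0 r' 0]
    simp [PF.cp_zero_drivers, PF.a_neg_snd]
  · -- s = s' + 1
    rw [show (((s'+1:ℕ)):ℤ) - 1 = ((s' : ℕ) : ℤ) from by push_cast; ring,
      PF.a_nat0 r (s'+1), PF.a_nat0 r s', PF.a_nat1 r s']
    obtain rfl | ⟨r'', rfl⟩ : r = 0 ∨ ∃ r'', r = r'' + 1 := by
      rcases r with _ | r''
      exacts [Or.inl rfl, Or.inr ⟨r'', rfl⟩]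
    · rw [show (((0:ℕ)):ℤ) - 1 = (-1 : ℤ) from by norm_num, PF.a_neg_fst]
      simp only [Nat.zero_add, Nat.add_zero]
      have key := PF.cp_rec (n := s') s'
      have hz : cp s' (s'+1) 0 = 0 := PF.cp_lt _ _ (by omega)
      rw [key, hz]
      simp only [Nat.zero_add]
    · rw [show (((r''+1:ℕ)):ℤ) - 1 = ((r'' : ℕ) : ℤ) from by push_cast; ring,
        PF.a_nat0 r'' (s'+1)]
      rw [show r''+1+(s'+1) = (r''+s'+1)+1 from by ring,
        show r''+(s'+1) = r''+s'+1 from by ring,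
        show r''+1+s' = r''+s'+1 from by ring]
      exact PF.cp_rec s'
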